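/- If d_min := min{|y_t − y_n| : t, n ∈ {p+1,...,N}, t ≠ n} is strictly positive, then for every choice of KDE-HMM parameters as described (any number of states M ≥ 1, any stochastic initial distribution π and transition matrix A, any strictly positive weights w_{qn}, and any positive bandwidths h_{ql}), the pseudo-likelihood satisfies f̃ ≤ (d_min·√(2πe))^{−(N−p)}. In particular, the pseudo-likelihood of a Gaussian-kernel KDE-HMM is bounded above uniformly over all parameter values; this is the key step in the proof of Proposition 1 (convergence of the pseudo-likelihood sequence under the guaranteed-ascent updates). -/

import Mathlib

lemma gauss_kernel_bound {dm d h0 : ℝ} (hdm : 0 < dm) (hh0 : 0 < h0)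
    (hd : dm ≤ |d|) :
    (Real.sqrt (2 * Real.pi))⁻¹ * Real.exp (-((d / h0) ^ 2) / 2)
      ≤ h0 * (dm * Real.sqrt (2 * Real.pi * Real.exp 1))⁻¹ := by
  have hs : 0 < Real.sqrt (2 * Real.pi) := Real.sqrt_pos.mpr (by positivity)
  have hse : Real.sqrt (Real.exp 1) = Real.exp (1/2) := by
    rw [show Real.exp 1 = Real.exp (1/2) * Real.exp (1/2) by
      rw [← Real.exp_add]; norm_num]
    exact Real.sqrt_mul_self (Real.exp_nonneg _)
  have hsplit : Real.sqrt (2 * Real.pi * Real.exp 1)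
      = Real.sqrt (2 * Real.pi) * Real.exp (1/2) := by
    rw [Real.sqrt_mul (by positivity), hse]
  set x := dm / h0 with hxdef
  have hx : 0 < x := by positivity
  have hlog : x ≤ Real.exp (x - 1) := by
    have := Real.add_one_le_exp (x - 1); linarith
  have key0 : x * Real.exp (1/2) * Real.exp (-(x^2)/2) ≤ 1 := by
    calc x * Real.exp (1/2) * Real.exp (-(x^2)/2)
        ≤ Real.exp (x-1) * Real.exp (1/2) * Real.exp (-(x^2)/2) := by
          have h2 : (0:ℝ) < Real.exp (1/2) * Real.exp (-(x^2)/2) := by positivity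
          nlinarith [hlog, h2]
      _ = Real.exp (x - 1 + 1/2 + -(x^2)/2) := by rw [← Real.exp_add, ← Real.exp_add]
      _ ≤ Real.exp 0 := by
          apply Real.exp_le_exp.mpr; nlinarith [sq_nonneg (x-1)]
      _ = 1 := Real.exp_zero
  have hsq : (dm/h0)^2 ≤ (d/h0)^2 := by
    have h1 : dm^2 ≤ d^2 := by nlinarith [sq_abs d, hd, hdm.le, abs_nonneg d]
    rw [div_pow, div_pow]
    gcongr
  have key : dm * Real.exp (1/2) * Real.exp (-((d/h0)^2)/2) ≤ h0 := by
    calc dm * Real.exp (1/2) * Real.exp (-((d/h0)^2)/2)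
        ≤ dm * Real.exp (1/2) * Real.exp (-(x^2)/2) := by
          have hEle : Real.exp (-((d/h0)^2)/2) ≤ Real.exp (-(x^2)/2) := by
            apply Real.exp_le_exp.mpr; rw [hxdef]; linarith
          have : (0:ℝ) ≤ dm * Real.exp (1/2) := by positivity
          exact mul_le_mul_of_nonneg_left hEle this
      _ = h0 * (x * Real.exp (1/2) * Real.exp (-(x^2)/2)) := by
          rw [hxdef]; field_simp
      _ ≤ h0 * 1 := mul_le_mul_of_nonneg_left key0 hh0.le
      _ = h0 := mul_one _
  rw [hsplit]
  have hpos : 0 < dm * (Real.sqrt (2*Real.pi) * Real.exp (1/2)) := by positivity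
  rw [mul_comm (Real.sqrt (2*Real.pi))⁻¹ _, ← div_eq_mul_inv, ← div_eq_mul_inv,
    div_le_div_iff₀ hs hpos]
  calc Real.exp (-((d/h0)^2)/2) * (dm * (Real.sqrt (2*Real.pi) * Real.exp (1/2)))
      = (dm * Real.exp (1/2) * Real.exp (-((d/h0)^2)/2)) * Real.sqrt (2*Real.pi) := by ring
    _ ≤ h0 * Real.sqrt (2*Real.pi) := mul_le_mul_of_nonneg_right key hs.le

lemma chain_sum {M : ℕ} (A : Fin M → Fin M → ℝ) (hA1 : ∀ q, ∑ q', A q q' = 1) :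
    ∀ (m : ℕ) (hm : 0 < m) (πv : Fin M → ℝ), (∑ q, πv q = 1) →
      ∑ σ : Fin m → Fin M, πv (σ ⟨0, hm⟩) *
        ∏ i : Fin m,
          (if hi : (i : ℕ) + 1 < m then A (σ i) (σ ⟨(i : ℕ) + 1, hi⟩) else 1) = 1 := by
  intro m
  induction m with
  | zero => intro hm; exact absurd hm (lt_irrefl 0)
  | succ n ih =>
    intro hm πv hπ
    rw [← Equiv.sum_comp (Fin.consEquiv (fun _ => Fin M)), Fintype.sum_prod_type]
    rcases Nat.eq_zero_or_pos n with h0 | hn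
    · subst h0
      simp only [Fin.consEquiv_apply]
      have : ∀ (q : Fin M) (τ : Fin 0 → Fin M),
          πv ((Fin.cons q τ : Fin _ → Fin M) ⟨0, hm⟩) *
            ∏ i : Fin 1,
              (if hi : (i : ℕ) + 1 < 1 then
                A ((Fin.cons q τ : Fin _ → Fin M) i) ((Fin.cons q τ : Fin _ → Fin M) ⟨(i : ℕ) + 1, hi⟩) else 1) = πv q := by
        intro q τ
        rw [show (⟨0, hm⟩ : Fin 1) = 0 from rfl, Fin.cons_zero]
        simp
      simp only [this]
      simpa using hπ
    · have step : ∀ (q : Fin M) (τ : Fin n → Fin M),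
          πv ((Fin.cons q τ : Fin _ → Fin M) ⟨0, hm⟩) *
            ∏ i : Fin (n+1),
              (if hi : (i : ℕ) + 1 < n + 1 then
                A ((Fin.cons q τ : Fin _ → Fin M) i) ((Fin.cons q τ : Fin _ → Fin M) ⟨(i : ℕ) + 1, hi⟩) else 1)
          = πv q * (A q (τ ⟨0, hn⟩) *
              ∏ i : Fin n,
                (if hi : (i : ℕ) + 1 < n then A (τ i) (τ ⟨(i : ℕ) + 1, hi⟩) else 1)) := by
        intro q τ
        rw [show (⟨0, hm⟩ : Fin (n+1)) = 0 from rfl, Fin.cons_zero,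
          Fin.prod_univ_succ]
        refine congrArg (πv q * ·) (congrArg₂ (· * ·) ?_ (Finset.prod_congr rfl fun i _ => ?_))
        · rw [dif_pos (show ((0 : Fin (n+1)) : ℕ) + 1 < n + 1 by simpa using hn),
            Fin.cons_zero,
            show (⟨((0 : Fin (n+1)) : ℕ) + 1, by simpa using hn⟩ : Fin (n+1))
              = Fin.succ ⟨0, hn⟩ from rfl, Fin.cons_succ]
        · by_cases hi : (i : ℕ) + 1 < n
          · have hc : ((i.succ : Fin (n+1)) : ℕ) + 1 < n + 1 := by
              simp only [Fin.val_succ]; omega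
            rw [dif_pos hc, dif_pos hi]
            rw [show ((Fin.cons q τ : Fin _ → Fin M) i.succ) = τ i from Fin.cons_succ (α := fun _ => Fin M) q τ i]
            exact congrArg (A (τ i)) (Fin.cons_succ (α := fun _ => Fin M) q τ ⟨(i : ℕ) + 1, hi⟩)
          · have hc : ¬ (((i.succ : Fin (n+1)) : ℕ) + 1 < n + 1) := by
              simp only [Fin.val_succ]; omega
            rw [dif_neg hc, dif_neg hi]
      simp only [Fin.consEquiv_apply, step]
      have inner : ∀ q : Fin M,
          ∑ τ : Fin n → Fin M, πv q * (A q (τ ⟨0, hn⟩) *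
            ∏ i : Fin n,
              (if hi : (i : ℕ) + 1 < n then A (τ i) (τ ⟨(i : ℕ) + 1, hi⟩) else 1))
          = πv q := by
        intro q
        rw [← Finset.mul_sum, ih hn (A q) (hA1 q), mul_one]
      exact (Finset.sum_congr rfl fun q _ => inner q).trans hπ


open Finset in
/-- Uniform upper bound on the pseudo-likelihood of a Gaussian-kernel KDE-HMM: if the
minimum separation `dmin` between distinct data points (with indices in `{p+1,…,N}`) is
strictly positive, then for every choice of KDE-HMM parameters (any number of states
`M ≥ 1`, any stochastic initial distribution `π` and transition matrix `A`, any strictly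
positive weights `w q n`, and any positive bandwidths `h q l`) the pseudo-likelihood is at
most `(dmin √(2πe))^{-(N-p)}`.  This is the key step in the proof of Proposition 1. -/
theorem kdehmm_pseudolikelihood_uniform_bound
    (p N : ℕ) (hp : 1 ≤ p) (hN : p + 1 < N) (y : ℕ → ℝ)
    (M : ℕ) (hM : 1 ≤ M)
    (π0 : Fin M → ℝ) (hπ0 : ∀ q, 0 ≤ π0 q) (hπ1 : ∑ q, π0 q = 1)
    (A : Fin M → Fin M → ℝ) (hA0 : ∀ q q', 0 ≤ A q q') (hA1 : ∀ q, ∑ q', A q q' = 1)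
    (w : Fin M → ℕ → ℝ) (hw : ∀ q n, n ∈ Finset.Icc (p + 1) N → 0 < w q n)
    (h : Fin M → ℕ → ℝ) (hh : ∀ q l, l ≤ p → 0 < h q l)
    (hS : ((Finset.Icc (p + 1) N ×ˢ Finset.Icc (p + 1) N).filter
        fun tn => tn.1 ≠ tn.2).Nonempty)
    (dmin : ℝ)
    (hdmin_def : dmin = ((Finset.Icc (p + 1) N ×ˢ Finset.Icc (p + 1) N).filter
        fun tn => tn.1 ≠ tn.2).inf' hS fun tn => |y tn.1 - y tn.2|)
    (hdmin_pos : 0 < dmin) :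
    let k : ℝ → ℝ := fun r => (Real.sqrt (2 * Real.pi))⁻¹ * Real.exp (-(r ^ 2) / 2)
    -- cross-validated state-conditional next-step density evaluated at `y t`
    let F : ℕ → Fin M → ℝ := fun t q =>
      (∑ n ∈ (Finset.Icc (p + 1) N).erase t,
          w q n * ∏ l ∈ Finset.range (p + 1), k ((y (t - l) - y (n - l)) / h q l)) /
        (h q 0 * ∑ n ∈ (Finset.Icc (p + 1) N).erase t,
          w q n * ∏ l ∈ Finset.Icc 1 p, k ((y (t - l) - y (n - l)) / h q l))
    -- pseudo-likelihood: sum over all hidden-state sequences (index `i : Fin (N - p)`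
    -- corresponds to time `t = p + 1 + i`)
    (∑ σ : Fin (N - p) → Fin M,
        π0 (σ ⟨0, by omega⟩) *
          (∏ i : Fin (N - p),
            if hi : (i : ℕ) + 1 < N - p then A (σ i) (σ ⟨(i : ℕ) + 1, hi⟩) else 1) *
          ∏ i : Fin (N - p), F (p + 1 + (i : ℕ)) (σ i))
      ≤ ((dmin * Real.sqrt (2 * Real.pi * Real.exp 1))⁻¹) ^ (N - p) := by
  intro k F
  set C := (dmin * Real.sqrt (2 * Real.pi * Real.exp 1))⁻¹ with hC
  have hCpos : 0 < C := by
    rw [hC]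
    exact inv_pos.mpr (mul_pos hdmin_pos (Real.sqrt_pos.mpr (by positivity)))
  have hkpos : ∀ r, 0 < k r := by
    intro r
    show 0 < (Real.sqrt (2 * Real.pi))⁻¹ * Real.exp (-(r ^ 2) / 2)
    have : 0 < Real.sqrt (2 * Real.pi) := Real.sqrt_pos.mpr (by positivity)
    positivity
  have hIccCard : (Finset.Icc (p + 1) N).card = N - p := by
    rw [Nat.card_Icc]; omega
  -- the key bound on F
  have hF : ∀ t ∈ Finset.Icc (p + 1) N, ∀ q : Fin M, 0 ≤ F t q ∧ F t q ≤ C := by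
    intro t ht q
    have hwpos : ∀ n ∈ (Finset.Icc (p + 1) N).erase t, 0 < w q n :=
      fun n hn => hw q n (Finset.mem_of_mem_erase hn)
    have hP : ∀ n : ℕ, 0 < ∏ l ∈ Finset.Icc 1 p, k ((y (t - l) - y (n - l)) / h q l) :=
      fun n => Finset.prod_pos fun l _ => hkpos _
    have hSne : ((Finset.Icc (p + 1) N).erase t).Nonempty := by
      rw [← Finset.card_pos, Finset.card_erase_of_mem ht, hIccCard]; omega
    have hden : 0 < ∑ n ∈ (Finset.Icc (p + 1) N).erase t,
        w q n * ∏ l ∈ Finset.Icc 1 p, k ((y (t - l) - y (n - l)) / h q l) :=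
      Finset.sum_pos (fun n hn => mul_pos (hwpos n hn) (hP n)) hSne
    have hh0 : 0 < h q 0 := hh q 0 (Nat.zero_le p)
    have hsplit : Finset.range (p + 1) = insert 0 (Finset.Icc 1 p) := by
      ext l; simp only [Finset.mem_range, Finset.mem_insert, Finset.mem_Icc]; omega
    have hnum : ∀ n ∈ (Finset.Icc (p + 1) N).erase t,
        w q n * ∏ l ∈ Finset.range (p + 1), k ((y (t - l) - y (n - l)) / h q l)
          ≤ w q n * ((h q 0 * C) * ∏ l ∈ Finset.Icc 1 p, k ((y (t - l) - y (n - l)) / h q l)) := by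
      intro n hn
      have hdd : dmin ≤ |y t - y n| := by
        rw [hdmin_def]
        have hmemf : (t, n) ∈ (Finset.Icc (p + 1) N ×ˢ Finset.Icc (p + 1) N).filter
            (fun tn => tn.1 ≠ tn.2) := by
          refine Finset.mem_filter.mpr ⟨?_, ?_⟩
          · exact Finset.mem_product.mpr ⟨ht, Finset.mem_of_mem_erase hn⟩
          · exact (Finset.ne_of_mem_erase hn).symm
        exact Finset.inf'_le (fun tn => |y tn.1 - y tn.2|) hmemf
      have hk0 : k ((y t - y n) / h q 0) ≤ h q 0 * C := by
        show (Real.sqrt (2 * Real.pi))⁻¹ * Real.exp (-(((y t - y n) / h q 0) ^ 2) / 2)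
          ≤ h q 0 * C
        rw [hC]
        exact gauss_kernel_bound hdmin_pos hh0 hdd
      have : ∏ l ∈ Finset.range (p + 1), k ((y (t - l) - y (n - l)) / h q l)
          = k ((y t - y n) / h q 0) *
              ∏ l ∈ Finset.Icc 1 p, k ((y (t - l) - y (n - l)) / h q l) := by
        rw [hsplit, Finset.prod_insert (by simp)]
        norm_num
      rw [this]
      refine mul_le_mul_of_nonneg_left ?_ (hwpos n hn).le
      exact mul_le_mul_of_nonneg_right hk0 (hP n).le
    constructor
    · show 0 ≤ _ / _
      refine div_nonneg (Finset.sum_nonneg fun n hn => ?_) (mul_pos hh0 hden).le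
      exact mul_nonneg (hwpos n hn).le (Finset.prod_nonneg fun l _ => (hkpos _).le)
    · show _ / _ ≤ C
      rw [div_le_iff₀ (mul_pos hh0 hden)]
      calc ∑ n ∈ (Finset.Icc (p + 1) N).erase t,
            w q n * ∏ l ∈ Finset.range (p + 1), k ((y (t - l) - y (n - l)) / h q l)
          ≤ ∑ n ∈ (Finset.Icc (p + 1) N).erase t,
            w q n * ((h q 0 * C) * ∏ l ∈ Finset.Icc 1 p, k ((y (t - l) - y (n - l)) / h q l)) :=
            Finset.sum_le_sum hnum
        _ = C * (h q 0 * ∑ n ∈ (Finset.Icc (p + 1) N).erase t,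
            w q n * ∏ l ∈ Finset.Icc 1 p, k ((y (t - l) - y (n - l)) / h q l)) := by
            rw [Finset.mul_sum, Finset.mul_sum]
            exact Finset.sum_congr rfl fun n _ => by ring
  have hm : 0 < N - p := by omega
  have hmem : ∀ i : Fin (N - p), p + 1 + (i : ℕ) ∈ Finset.Icc (p + 1) N := by
    intro i
    have := i.isLt
    simp only [Finset.mem_Icc]; omega
  have hAprod : ∀ σ : Fin (N - p) → Fin M,
      0 ≤ π0 (σ ⟨0, hm⟩) *
        ∏ i : Fin (N - p),
          (if hi : (i : ℕ) + 1 < N - p then A (σ i) (σ ⟨(i : ℕ) + 1, hi⟩) else 1) := by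
    intro σ
    refine mul_nonneg (hπ0 _) (Finset.prod_nonneg fun i _ => ?_)
    split
    · exact hA0 _ _
    · exact zero_le_one
  have hFprod : ∀ σ : Fin (N - p) → Fin M,
      ∏ i : Fin (N - p), F (p + 1 + (i : ℕ)) (σ i) ≤ C ^ (N - p) := by
    intro σ
    calc ∏ i : Fin (N - p), F (p + 1 + (i : ℕ)) (σ i)
        ≤ ∏ _i : Fin (N - p), C :=
          Finset.prod_le_prod (fun i _ => (hF _ (hmem i) (σ i)).1)
            (fun i _ => (hF _ (hmem i) (σ i)).2)
      _ = C ^ (N - p) := by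
          rw [Finset.prod_const, Finset.card_univ, Fintype.card_fin]
  calc (∑ σ : Fin (N - p) → Fin M,
        π0 (σ ⟨0, hm⟩) *
          (∏ i : Fin (N - p),
            if hi : (i : ℕ) + 1 < N - p then A (σ i) (σ ⟨(i : ℕ) + 1, hi⟩) else 1) *
          ∏ i : Fin (N - p), F (p + 1 + (i : ℕ)) (σ i))
      ≤ ∑ σ : Fin (N - p) → Fin M,
        π0 (σ ⟨0, hm⟩) *
          (∏ i : Fin (N - p),
            if hi : (i : ℕ) + 1 < N - p then A (σ i) (σ ⟨(i : ℕ) + 1, hi⟩) else 1) *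
          C ^ (N - p) :=
        Finset.sum_le_sum fun σ _ =>
          mul_le_mul_of_nonneg_left (hFprod σ) (hAprod σ)
    _ = (∑ σ : Fin (N - p) → Fin M,
          π0 (σ ⟨0, hm⟩) *
            ∏ i : Fin (N - p),
              (if hi : (i : ℕ) + 1 < N - p then A (σ i) (σ ⟨(i : ℕ) + 1, hi⟩) else 1)) *
          C ^ (N - p) := (Finset.sum_mul _ _ _).symm
    _ = 1 * C ^ (N - p) := by rw [chain_sum A hA1 (N - p) hm π0 hπ1]
    _ = C ^ (N - p) := one_mul _
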